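/- Let G be a connected finite simple graph with n vertices and minimum degree δ. Then for every real number p with 0 ≤ p ≤ 1, γ_r(G) ≤ 2np + 2n·e^{-p(δ+1)}. -/

import Mathlib

/-- A set `D` is a restrained dominating set of `G` if every vertex not in `D`
is adjacent to a vertex in `D` and to a vertex outside `D`. -/
def IsRestrainedDominatingSet {V : Type*} (G : SimpleGraph V) (D : Finset V) : Prop :=
  (∀ v, v ∉ D → ∃ u ∈ D, G.Adj v u) ∧ (∀ v, v ∉ D → ∃ u, u ∉ D ∧ G.Adj v u)

/-- The restrained domination number: minimum cardinality of a restrained dominating set. -/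
noncomputable def restrainedDominationNumber {V : Type*} [Fintype V] (G : SimpleGraph V) : ℕ :=
  sInf {n | ∃ D : Finset V, IsRestrainedDominatingSet G D ∧ D.card = n}

open Finset


section Weight

variable {V : Type*} [Fintype V] (p : ℝ)

noncomputable def wgt (A : Finset V) : ℝ :=
  p ^ A.card * (1 - p) ^ (Fintype.card V - A.card)

lemma wgt_nonneg (hp0 : 0 ≤ p) (hp1 : p ≤ 1) (A : Finset V) : 0 ≤ wgt p A := by
  have h : (0:ℝ) ≤ 1 - p := by linarith
  exact mul_nonneg (pow_nonneg hp0 _) (pow_nonneg h _)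

lemma wgt_eq_prod [DecidableEq V] (A : Finset V) :
    wgt p A = (∏ _v ∈ A, p) * ∏ _v ∈ (univ : Finset V) \ A, (1 - p) := by
  rw [prod_const, prod_const, card_sdiff_of_subset (subset_univ A), wgt]
  congr 1

lemma sum_wgt : ∑ A ∈ (univ : Finset V).powerset, wgt p A = 1 := by
  classical
  have h := Finset.prod_add (fun _ : V => p) (fun _ : V => 1 - p) univ
  calc ∑ A ∈ (univ : Finset V).powerset, wgt p A
      = ∑ A ∈ (univ : Finset V).powerset,
          (∏ _v ∈ A, p) * ∏ _v ∈ (univ : Finset V) \ A, (1 - p) :=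
        Finset.sum_congr rfl (fun A _ => wgt_eq_prod p A)
    _ = ∏ _v ∈ (univ : Finset V), (p + (1 - p)) := h.symm
    _ = 1 := by simp

lemma sum_wgt_mem [DecidableEq V] (v : V) :
    ∑ A ∈ (univ : Finset V).powerset, wgt p A * (if v ∈ A then (1:ℝ) else 0) = p := by
  classical
  have h := Finset.prod_add (fun _ : V => p) (fun u : V => if u = v then 0 else 1 - p) univ
  have key : ∀ A ∈ (univ : Finset V).powerset,
      wgt p A * (if v ∈ A then (1:ℝ) else 0)
        = (∏ _u ∈ A, p) * ∏ u ∈ (univ : Finset V) \ A, (if u = v then 0 else 1 - p) := by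
    intro A _
    by_cases hv : v ∈ A
    · rw [if_pos hv, mul_one, wgt_eq_prod]
      congr 1
      refine Finset.prod_congr rfl (fun u hu => ?_)
      rw [if_neg]
      intro h'
      exact (Finset.mem_sdiff.mp hu).2 (h' ▸ hv)
    · rw [if_neg hv, mul_zero]
      refine (mul_eq_zero_of_right _ ?_).symm
      exact Finset.prod_eq_zero (i := v) (by simp [hv]) (if_pos rfl)
  rw [Finset.sum_congr rfl key, ← h]
  rw [Finset.prod_eq_single v (fun u _ hu => by simp [hu]) (by simp)]
  simp

lemma sum_wgt_disjoint [DecidableEq V] (T : Finset V) :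
    ∑ A ∈ (univ : Finset V).powerset, wgt p A * (if A ∩ T = ∅ then (1:ℝ) else 0)
      = (1 - p) ^ T.card := by
  classical
  have h := Finset.prod_add (fun u : V => if u ∈ T then 0 else p) (fun _ : V => 1 - p) univ
  have key : ∀ A ∈ (univ : Finset V).powerset,
      wgt p A * (if A ∩ T = ∅ then (1:ℝ) else 0)
        = (∏ u ∈ A, (if u ∈ T then 0 else p)) * ∏ _u ∈ (univ : Finset V) \ A, (1 - p) := by
    intro A _
    by_cases hd : A ∩ T = ∅
    · rw [if_pos hd, mul_one, wgt_eq_prod]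
      congr 1
      refine Finset.prod_congr rfl (fun u hu => ?_)
      rw [if_neg]
      intro h'
      exact (Finset.eq_empty_iff_forall_notMem.mp hd u) (Finset.mem_inter.mpr ⟨hu, h'⟩)
    · rw [if_neg hd, mul_zero]
      obtain ⟨u, hu⟩ := Finset.nonempty_iff_ne_empty.mpr hd
      refine (mul_eq_zero_of_left ?_ _).symm
      exact Finset.prod_eq_zero (Finset.mem_inter.mp hu).1 (if_pos (Finset.mem_inter.mp hu).2)
  rw [Finset.sum_congr rfl key, ← h]
  have : ∀ u : V, (if u ∈ T then (0:ℝ) else p) + (1 - p) = if u ∈ T then (1 - p) else 1 := by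
    intro u; split_ifs <;> ring
  rw [Finset.prod_congr rfl (fun u _ => this u), Finset.prod_ite_mem, Finset.univ_inter,
    Finset.prod_const]

end Weight

section Construction

variable {V : Type*} [Fintype V] [DecidableEq V] (G : SimpleGraph V) [DecidableRel G.Adj]

def RB (A : Finset V) : Finset V :=
  univ.filter (fun v => v ∉ A ∧ ∀ u ∈ G.neighborFinset v, u ∉ A)

def RC (A : Finset V) : Finset V :=
  univ.filter (fun v => v ∉ A ∧ v ∉ RB G A ∧ ∀ u ∈ G.neighborFinset v, u ∈ A ∪ RB G A)

def RD (A : Finset V) : Finset V := A ∪ RB G A ∪ RC G A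

lemma mem_RB_iff (A : Finset V) (v : V) :
    v ∈ RB G A ↔ A ∩ (insert v (G.neighborFinset v)) = ∅ := by
  simp only [RB, mem_filter, mem_univ, true_and]
  constructor
  · rintro ⟨hv, hN⟩
    apply Finset.eq_empty_iff_forall_notMem.mpr
    intro u hu
    rcases Finset.mem_inter.mp hu with ⟨huA, huI⟩
    rcases Finset.mem_insert.mp huI with rfl | hN'
    · exact hv huA
    · exact hN u hN' huA
  · intro h
    have := Finset.eq_empty_iff_forall_notMem.mp h
    constructor
    · intro hv
      exact this v (Finset.mem_inter.mpr ⟨hv, Finset.mem_insert_self _ _⟩)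
    · intro u hu huA
      exact this u (Finset.mem_inter.mpr ⟨huA, Finset.mem_insert_of_mem hu⟩)

lemma RD_isRDS (A : Finset V) : IsRestrainedDominatingSet G (RD G A) := by
  constructor
  · intro v hv
    simp only [RD, Finset.mem_union, not_or] at hv
    obtain ⟨⟨hvA, hvB⟩, hvC⟩ := hv
    simp only [RB, mem_filter, mem_univ, true_and, not_and] at hvB
    push_neg at hvB
    obtain ⟨u, hu, huA⟩ := hvB hvA
    exact ⟨u, by simp [RD, huA], (SimpleGraph.mem_neighborFinset _ _ _).mp hu⟩
  · intro v hv
    simp only [RD, Finset.mem_union, not_or] at hv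
    obtain ⟨⟨hvA, hvB⟩, hvC⟩ := hv
    simp only [RC, mem_filter, mem_univ, true_and] at hvC
    push_neg at hvC
    obtain ⟨u, hu, huAB⟩ := hvC hvA hvB
    refine ⟨u, ?_, (SimpleGraph.mem_neighborFinset _ _ _).mp hu⟩
    simp only [RD, Finset.mem_union, not_or]
    rw [Finset.mem_union] at huAB
    push_neg at huAB
    refine ⟨huAB, ?_⟩
    intro huC
    simp only [RC, mem_filter, mem_univ, true_and] at huC
    have hvN : v ∈ G.neighborFinset u := by
      rw [SimpleGraph.mem_neighborFinset]
      exact ((SimpleGraph.mem_neighborFinset _ _ _).mp hu).symm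
    have := huC.2.2 v hvN
    rw [Finset.mem_union] at this
    rcases this with h | h
    · exact hvA h
    · exact hvB h

end Construction

theorem stmt_16_aux {V : Type*} [Fintype V] [DecidableEq V] (G : SimpleGraph V)
    [DecidableRel G.Adj] (p : ℝ) (hp0 : 0 ≤ p) (hp1 : p ≤ 1) :
    ∃ A : Finset V, (( RD G A).card : ℝ) ≤
      (Fintype.card V) * (2 * p + 2 * (1 - p) ^ (G.minDegree + 1)) := by
  classical
  set n := Fintype.card V
  set q : ℝ := (1 - p) ^ (G.minDegree + 1) with hq
  have hq0 : (0:ℝ) ≤ 1 - p := by linarith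
  have hq1 : (1:ℝ) - p ≤ 1 := by linarith
  have hqnn : 0 ≤ q := pow_nonneg hq0 _
  -- Per-vertex bounds
  have hB : ∀ v : V,
      ∑ A ∈ (univ : Finset V).powerset, wgt p A * (if v ∈ RB G A then (1:ℝ) else 0) ≤ q := by
    intro v
    have : ∀ A : Finset V, (if v ∈ RB G A then (1:ℝ) else 0)
        = (if A ∩ (insert v (G.neighborFinset v)) = ∅ then (1:ℝ) else 0) := by
      intro A
      by_cases h : v ∈ RB G A
      · rw [if_pos h, if_pos ((mem_RB_iff G A v).mp h)]
      · rw [if_neg h, if_neg (fun h' => h ((mem_RB_iff G A v).mpr h'))]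
    rw [Finset.sum_congr rfl (fun A _ => by rw [this A]), sum_wgt_disjoint]
    have hcard : (insert v (G.neighborFinset v)).card = G.degree v + 1 := by
      rw [Finset.card_insert_of_notMem (by simp), SimpleGraph.card_neighborFinset_eq_degree]
    rw [hcard]
    exact pow_le_pow_of_le_one hq0 hq1 (by
      have := G.minDegree_le_degree v
      omega)
  have hC : ∀ v : V,
      ∑ A ∈ (univ : Finset V).powerset, wgt p A * (if v ∈ RC G A then (1:ℝ) else 0)
        ≤ p + q := by
    intro v
    by_cases hnb : ∃ u, G.Adj v u
    · obtain ⟨u, hu⟩ := hnb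
      have hpt : ∀ A ∈ (univ : Finset V).powerset,
          wgt p A * (if v ∈ RC G A then (1:ℝ) else 0)
            ≤ wgt p A * (if u ∈ A then (1:ℝ) else 0)
              + wgt p A * (if u ∈ RB G A then (1:ℝ) else 0) := by
        intro A _
        have hw := wgt_nonneg p hp0 hp1 A
        have hi1 : (0:ℝ) ≤ (if u ∈ A then (1:ℝ) else 0) := by split_ifs <;> norm_num
        have hi2 : (0:ℝ) ≤ (if u ∈ RB G A then (1:ℝ) else 0) := by split_ifs <;> norm_num
        by_cases hvc : v ∈ RC G A
        · have : u ∈ A ∪ RB G A := by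
            simp only [RC, mem_filter, mem_univ, true_and] at hvc
            exact hvc.2.2 u ((SimpleGraph.mem_neighborFinset _ _ _).mpr hu)
          rcases Finset.mem_union.mp this with h | h
          · rw [if_pos hvc, if_pos h]
            nlinarith [mul_nonneg hw hi2]
          · rw [if_pos hvc, if_pos h]
            nlinarith [mul_nonneg hw hi1]
        · rw [if_neg hvc, mul_zero]
          positivity
      calc ∑ A ∈ (univ : Finset V).powerset, wgt p A * (if v ∈ RC G A then (1:ℝ) else 0)
          ≤ ∑ A ∈ (univ : Finset V).powerset,
              (wgt p A * (if u ∈ A then (1:ℝ) else 0)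
                + wgt p A * (if u ∈ RB G A then (1:ℝ) else 0)) := Finset.sum_le_sum hpt
        _ = (∑ A ∈ (univ : Finset V).powerset, wgt p A * (if u ∈ A then (1:ℝ) else 0))
            + ∑ A ∈ (univ : Finset V).powerset, wgt p A * (if u ∈ RB G A then (1:ℝ) else 0) :=
            Finset.sum_add_distrib
        _ ≤ p + q := by
            rw [sum_wgt_mem]
            exact add_le_add (le_refl p) (hB u)
    · -- v has no neighbor: v is never in RC
      have : ∀ A : Finset V, v ∉ RC G A := by
        intro A hvc
        simp only [RC, mem_filter, mem_univ, true_and] at hvc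
        obtain ⟨hvA, hvB, _⟩ := hvc
        apply hvB
        simp only [RB, mem_filter, mem_univ, true_and]
        refine ⟨hvA, fun u hu => ?_⟩
        exact absurd ((SimpleGraph.mem_neighborFinset _ _ _).mp hu) (fun h => hnb ⟨u, h⟩)
      have h0 : ∑ A ∈ (univ : Finset V).powerset, wgt p A * (if v ∈ RC G A then (1:ℝ) else 0)
          = 0 := by
        apply Finset.sum_eq_zero
        intro A _
        rw [if_neg (this A), mul_zero]
      rw [h0]
      positivity
  -- indicator-sum bound on the cardinality of RD
  have hcardRD : ∀ A : Finset V, ((RD G A).card : ℝ)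
      ≤ ∑ v ∈ (univ : Finset V), ((if v ∈ A then (1:ℝ) else 0)
          + (if v ∈ RB G A then (1:ℝ) else 0) + (if v ∈ RC G A then (1:ℝ) else 0)) := by
    intro A
    have h1 : (RD G A).card ≤ A.card + (RB G A).card + (RC G A).card :=
      le_trans (Finset.card_union_le _ _) (by
        have := Finset.card_union_le A (RB G A)
        omega)
    have h2 : ∀ X : Finset V, (X.card : ℝ) = ∑ v ∈ (univ : Finset V),
        (if v ∈ X then (1:ℝ) else 0) := by
      intro X
      rw [Finset.sum_boole, Finset.filter_mem_eq_inter, Finset.univ_inter]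
    rw [Finset.sum_add_distrib, Finset.sum_add_distrib, ← h2, ← h2, ← h2]
    exact_mod_cast h1
  -- total expectation bound
  have htot : ∑ A ∈ (univ : Finset V).powerset, wgt p A * ((RD G A).card : ℝ)
      ≤ n * (2 * p + 2 * q) := by
    calc ∑ A ∈ (univ : Finset V).powerset, wgt p A * ((RD G A).card : ℝ)
        ≤ ∑ A ∈ (univ : Finset V).powerset, wgt p A *
            (∑ v ∈ (univ : Finset V), ((if v ∈ A then (1:ℝ) else 0)
              + (if v ∈ RB G A then (1:ℝ) else 0) + (if v ∈ RC G A then (1:ℝ) else 0))) := by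
          apply Finset.sum_le_sum
          intro A _
          exact mul_le_mul_of_nonneg_left (hcardRD A) (wgt_nonneg p hp0 hp1 A)
      _ = ∑ v ∈ (univ : Finset V), ∑ A ∈ (univ : Finset V).powerset,
            (wgt p A * (if v ∈ A then (1:ℝ) else 0)
              + wgt p A * (if v ∈ RB G A then (1:ℝ) else 0)
              + wgt p A * (if v ∈ RC G A then (1:ℝ) else 0)) := by
          rw [Finset.sum_comm]
          apply Finset.sum_congr rfl
          intro A _
          rw [Finset.mul_sum]
          apply Finset.sum_congr rfl
          intro v _
          ring
      _ ≤ ∑ v ∈ (univ : Finset V), (p + q + (p + q)) := by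
          apply Finset.sum_le_sum
          intro v _
          rw [Finset.sum_add_distrib, Finset.sum_add_distrib, sum_wgt_mem]
          have := hB v
          have := hC v
          linarith
      _ = n * (2 * p + 2 * q) := by
          rw [Finset.sum_const, Finset.card_univ]
          push_cast
          ring
  -- extract a good A
  by_contra hcon
  push_neg at hcon
  have hlt : (n : ℝ) * (2 * p + 2 * q)
      < ∑ A ∈ (univ : Finset V).powerset, wgt p A * ((RD G A).card : ℝ) := by
    have hsum1 : ∑ A ∈ (univ : Finset V).powerset, wgt p A = 1 := sum_wgt p
    have hex : ∃ A ∈ (univ : Finset V).powerset, wgt p A ≠ 0 := by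
      by_contra hall
      push_neg at hall
      rw [Finset.sum_eq_zero hall] at hsum1
      norm_num at hsum1
    obtain ⟨A0, hA0mem, hA0⟩ := hex
    have hA0pos : 0 < wgt p A0 := lt_of_le_of_ne (wgt_nonneg p hp0 hp1 A0) (Ne.symm hA0)
    calc (n : ℝ) * (2 * p + 2 * q)
        = ∑ A ∈ (univ : Finset V).powerset, wgt p A * ((n : ℝ) * (2 * p + 2 * q)) := by
          rw [← Finset.sum_mul, hsum1, one_mul]
      _ < ∑ A ∈ (univ : Finset V).powerset, wgt p A * ((RD G A).card : ℝ) := by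
          apply Finset.sum_lt_sum
          · intro A _
            exact mul_le_mul_of_nonneg_left (le_of_lt (hcon A)) (wgt_nonneg p hp0 hp1 A)
          · exact ⟨A0, hA0mem, by
              exact mul_lt_mul_of_pos_left (hcon A0) hA0pos⟩
  linarith

/-- For a connected graph `G` with `n` vertices and minimum degree `δ`, for every real
`p` with `0 ≤ p ≤ 1`, `γ_r(G) ≤ 2np + 2n·e^{-p(δ+1)}`. -/
theorem stmt_16 {V : Type*} [Fintype V] (G : SimpleGraph V) [DecidableRel G.Adj]
    (hconn : G.Connected) (n : ℕ) (hn : n = Fintype.card V)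
    (δ : ℕ) (hδ : δ = G.minDegree) :
    ∀ p : ℝ, 0 ≤ p → p ≤ 1 →
      (restrainedDominationNumber G : ℝ) ≤
        2 * n * p + 2 * n * Real.exp (-(p * (δ + 1))) := by
  classical
  intro p hp0 hp1
  obtain ⟨A, hA⟩ := stmt_16_aux G p hp0 hp1
  have hrds : IsRestrainedDominatingSet G (RD G A) := RD_isRDS G A
  have h1 : restrainedDominationNumber G ≤ (RD G A).card :=
    Nat.sInf_le ⟨RD G A, hrds, rfl⟩
  have h2 : ((restrainedDominationNumber G : ℝ)) ≤ ((RD G A).card : ℝ) := by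
    exact_mod_cast h1
  have hq : (1 - p) ^ (G.minDegree + 1) ≤ Real.exp (-(p * (δ + 1))) := by
    have h3 : (1:ℝ) - p ≤ Real.exp (-p) := by
      have := Real.add_one_le_exp (-p)
      linarith
    have h4 : (0:ℝ) ≤ 1 - p := by linarith
    calc (1 - p) ^ (G.minDegree + 1) ≤ (Real.exp (-p)) ^ (G.minDegree + 1) :=
          pow_le_pow_left₀ h4 h3 _
      _ = Real.exp (-(p * (δ + 1))) := by
          rw [← Real.exp_nat_mul, hδ]
          congr 1
          push_cast
          ring
  have hn' : (0:ℝ) ≤ (n : ℝ) := Nat.cast_nonneg n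
  calc (restrainedDominationNumber G : ℝ) ≤ ((RD G A).card : ℝ) := h2
    _ ≤ (Fintype.card V) * (2 * p + 2 * (1 - p) ^ (G.minDegree + 1)) := hA
    _ = (n : ℝ) * (2 * p + 2 * (1 - p) ^ (G.minDegree + 1)) := by rw [hn]
    _ ≤ (n : ℝ) * (2 * p + 2 * Real.exp (-(p * (δ + 1)))) := by
        apply mul_le_mul_of_nonneg_left _ hn'
        linarith
    _ = 2 * n * p + 2 * n * Real.exp (-(p * (δ + 1))) := by ring
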